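/- arXiv:2508.17159 — 2 statements merged into one kernel-verified Lean document; each statement's English description precedes it below -/
import Mathlib

section
/- For every δ with 0 < δ < 1/4 and every δ-pseudo orbit (x_k)_{k∈ℕ} of T, there exists y ∈ [0,∞) such that |T^k(y) − x_k| ≤ 21δ for all k ∈ ℕ. -/
open Set Filter

noncomputable section

/-- `ell n = min {k ∈ ℤ⁺ : n ≤ 4^k}`. -/
def ell (n : ℕ) : ℕ := sInf {k : ℕ | 1 ≤ k ∧ n ≤ 4 ^ k}

/-- The value of the map `T` at the nonnegative integer `n`:
`0` if `n` is even and `4 ^ ℓ(n) + 1` if `n` is odd. -/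
def Tval (n : ℕ) : ℝ := if Even n then 0 else 4 ^ ell n + 1

/-- `T : [0,∞) → [0,∞)` is the unique continuous map which is affine on each
integer interval `[n-1, n]` and takes the value `Tval n` at every nonnegative
integer `n`.  This is expressed by linear interpolation on each `[n, n+1]`. -/
def IsT (T : ℝ → ℝ) : Prop :=
  ∀ n : ℕ, ∀ x ∈ Set.Icc (n : ℝ) (n + 1),
    T x = ((n : ℝ) + 1 - x) * Tval n + (x - (n : ℝ)) * Tval (n + 1)

/-- `(x_k)` is a `δ`-pseudo orbit of `T` in `[0,∞)`. -/
def IsPseudoOrbit (T : ℝ → ℝ) (δ : ℝ) (x : ℕ → ℝ) : Prop :=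
  (∀ k, 0 ≤ x k) ∧ ∀ k, |x (k + 1) - T (x k)| < δ


lemma ell_spec (n : ℕ) : 1 ≤ ell n ∧ n ≤ 4 ^ ell n := by
  have hne : {k : ℕ | 1 ≤ k ∧ n ≤ 4 ^ k}.Nonempty := by
    refine ⟨max 1 n, le_max_left _ _, ?_⟩
    calc n ≤ max 1 n := le_max_right _ _
    _ ≤ 4 ^ max 1 n := Nat.le_of_lt (Nat.lt_pow_self (by norm_num))
  exact Nat.sInf_mem hne

lemma Tval_even {n : ℕ} (h : Even n) : Tval n = 0 := by simp [Tval, h]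

lemma Tval_odd {n : ℕ} (h : Odd n) : Tval n = 4 ^ ell n + 1 := by
  simp [Tval, Nat.not_even_iff_odd.mpr h]

lemma Tval_odd_ge {n : ℕ} (h : Odd n) : 5 ≤ Tval n ∧ (n : ℝ) + 1 ≤ Tval n := by
  obtain ⟨h1, h2⟩ := ell_spec n
  rw [Tval_odd h]
  constructor
  · have : (4:ℝ)^1 ≤ 4 ^ ell n := pow_le_pow_right₀ (by norm_num) h1
    norm_num at this ⊢; linarith
  · have : (n:ℝ) ≤ 4 ^ ell n := by exact_mod_cast Nat.cast_le.mpr h2 |>.trans_eq (by push_cast; ring)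
    linarith

lemma Tval_odd_nat {n : ℕ} (h : Odd n) : ∃ m : ℕ, Odd m ∧ (m : ℝ) = Tval n := by
  refine ⟨4 ^ ell n + 1, ?_, by rw [Tval_odd h]; push_cast; ring⟩
  have : Even (4 ^ ell n) := (Nat.even_pow).mpr ⟨by decide, by have := (ell_spec n).1; omega⟩
  exact this.add_one

variable {T : ℝ → ℝ}

/-- branch formula, even left end: increasing. -/
lemma T_evenb (hT : IsT T) {n : ℕ} (hn : Even n) {x : ℝ} (hx : x ∈ Icc (n:ℝ) (n+1)) :
    T x = (x - n) * Tval (n+1) := by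
  rw [hT n x hx, Tval_even hn]; ring

/-- branch formula, odd left end: decreasing. -/
lemma T_oddb (hT : IsT T) {n : ℕ} (hn : Odd n) {x : ℝ} (hx : x ∈ Icc (n:ℝ) (n+1)) :
    T x = ((n:ℝ) + 1 - x) * Tval n := by
  have h0 : Tval (n+1) = 0 := Tval_even hn.add_one
  rw [hT n x hx, h0]; ring

lemma Tval_nonneg (n : ℕ) : 0 ≤ Tval n := by
  rcases Nat.even_or_odd n with h | h
  · rw [Tval_even h]
  · linarith [(Tval_odd_ge h).1]

lemma exists_branch {x : ℝ} (hx : 0 ≤ x) : ∃ n : ℕ, x ∈ Icc (n:ℝ) (n+1) := by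
  refine ⟨⌊x⌋₊, Nat.floor_le hx, le_of_lt ?_⟩
  exact Nat.lt_floor_add_one x

lemma T_nonneg (hT : IsT T) {x : ℝ} (hx : 0 ≤ x) : 0 ≤ T x := by
  obtain ⟨n, hn⟩ := exists_branch hx
  rw [hT n x hn]
  have h1 := hn.1; have h2 := hn.2
  have := Tval_nonneg n; have := Tval_nonneg (n+1)
  nlinarith

lemma T_mapsTo (hT : IsT T) : MapsTo T (Ici 0) (Ici 0) := fun x hx => T_nonneg hT hx

lemma T_contOn (hT : IsT T) : ContinuousOn T (Ici 0) := by
  have hcov : Ici (0:ℝ) = ⋃ n : ℕ, Icc (n:ℝ) (n+1) := by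
    apply Subset.antisymm
    · intro x hx; obtain ⟨n, hn⟩ := exists_branch hx; exact mem_iUnion.mpr ⟨n, hn⟩
    · intro x hx; obtain ⟨n, hn⟩ := mem_iUnion.mp hx
      exact le_trans (by positivity) hn.1
  rw [hcov]
  apply LocallyFinite.continuousOn_iUnion
  · intro x
    refine ⟨Metric.ball x 1, Metric.ball_mem_nhds x one_pos, ?_⟩
    apply Set.Finite.subset (Set.finite_lt_nat (⌈x + 1⌉₊ + 1))
    intro n hn
    obtain ⟨y, hy1, hy2⟩ := hn
    simp only [Real.ball_eq_Ioo, mem_Ioo] at hy2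
    have : (n : ℝ) < x + 1 := lt_of_le_of_lt hy1.1 hy2.2
    simp only [Set.mem_setOf_eq]
    have := Nat.lt_ceil.mpr this
    omega
  · intro n; exact isClosed_Icc
  · intro n
    have : ContinuousOn (fun x : ℝ => ((n : ℝ) + 1 - x) * Tval n + (x - (n : ℝ)) * Tval (n + 1))
        (Icc (n:ℝ) (n+1)) := by fun_prop
    exact this.congr (fun x hx => hT n x hx)

lemma T_iter_mapsTo (hT : IsT T) (k : ℕ) : MapsTo (T^[k]) (Ici 0) (Ici (0:ℝ)) := by
  induction k with
  | zero => simpa using mapsTo_id _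
  | succ j ihj => rw [Function.iterate_succ']; exact (T_mapsTo hT).comp ihj

lemma T_iter_contOn (hT : IsT T) (k : ℕ) : ContinuousOn (T^[k]) (Ici 0) := by
  induction k with
  | zero => simpa using continuousOn_id
  | succ k ih =>
    rw [Function.iterate_succ']
    exact (T_contOn hT).comp ih (T_iter_mapsTo hT k)

lemma surj_even (hT : IsT T) {n : ℕ} (hn : Even n) {u v z : ℝ} (hu : (n:ℝ) ≤ u)
    (huv : u ≤ v) (hv : v ≤ (n:ℝ)+1) (hz1 : T u ≤ z) (hz2 : z ≤ T v) :
    ∃ w ∈ Icc u v, T w = z := by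
  set s := Tval (n+1) with hs
  have hs5 : 5 ≤ s := (Tval_odd_ge hn.add_one).1
  have hs0 : (0:ℝ) < s := by linarith
  have hTu : T u = (u - n) * s := T_evenb hT hn ⟨hu, huv.trans hv⟩
  have hTv : T v = (v - n) * s := T_evenb hT hn ⟨hu.trans huv, hv⟩
  refine ⟨(n:ℝ) + z / s, ⟨?_, ?_⟩, ?_⟩
  · rw [hTu] at hz1
    have : u - n ≤ z / s := (le_div_iff₀ hs0).mpr (by linarith)
    linarith
  · rw [hTv] at hz2
    have : z / s ≤ v - n := (div_le_iff₀ hs0).mpr (by linarith)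
    linarith
  · have hmem : (n:ℝ) + z / s ∈ Icc (n:ℝ) (n+1) := by
      constructor
      · rw [hTu] at hz1
        have : u - n ≤ z / s := (le_div_iff₀ hs0).mpr (by linarith)
        linarith
      · rw [hTv] at hz2
        have : z / s ≤ v - n := (div_le_iff₀ hs0).mpr (by linarith)
        linarith
    rw [T_evenb hT hn hmem]
    field_simp
    ring

lemma surj_odd (hT : IsT T) {n : ℕ} (hn : Odd n) {u v z : ℝ} (hu : (n:ℝ) ≤ u)
    (huv : u ≤ v) (hv : v ≤ (n:ℝ)+1) (hz1 : T v ≤ z) (hz2 : z ≤ T u) :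
    ∃ w ∈ Icc u v, T w = z := by
  set s := Tval n with hs
  have hs5 : 5 ≤ s := (Tval_odd_ge hn).1
  have hs0 : (0:ℝ) < s := by linarith
  have hTu : T u = ((n:ℝ) + 1 - u) * s := T_oddb hT hn ⟨hu, huv.trans hv⟩
  have hTv : T v = ((n:ℝ) + 1 - v) * s := T_oddb hT hn ⟨hu.trans huv, hv⟩
  have h1 : (n:ℝ) + 1 - v ≤ z / s := by
    rw [hTv] at hz1; exact (le_div_iff₀ hs0).mpr (by linarith)
  have h2 : z / s ≤ (n:ℝ) + 1 - u := by
    rw [hTu] at hz2; exact (div_le_iff₀ hs0).mpr (by linarith)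
  refine ⟨(n:ℝ) + 1 - z / s, ⟨by linarith, by linarith⟩, ?_⟩
  have hmem : (n:ℝ) + 1 - z / s ∈ Icc (n:ℝ) (n+1) := by
    constructor
    · have : z / s ≤ (n:ℝ) + 1 - u := h2
      linarith
    · linarith
  rw [T_oddb hT hn hmem]
  field_simp
  rw [← hs]; ring

/-- invariant for the interval `I` relative to the pseudo-orbit point `x` -/
def Good (δ x : ℝ) (I : Set ℝ) : Prop :=
  I = Icc (max (x - 2*δ) 0) (x + 2*δ) ∨
  ∃ m : ℕ, Odd m ∧ |x - (m:ℝ)| < 2*δ ∧ I = Icc ((m:ℝ) - 3*δ) (m:ℝ)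

variable {T : ℝ → ℝ}

set_option maxHeartbeats 2000000 in
lemma step (hT : IsT T) {δ x x' : ℝ} (hδ0 : 0 < δ) (hδ : δ < 1/4) (hx : 0 ≤ x)
    (hx' : 0 ≤ x') (hst : |x' - T x| < δ) {I : Set ℝ} (hI : Good δ x I) :
    ∃ I', Good δ x' I' ∧ ∀ z ∈ I', ∃ u ∈ I, T u = z := by
  obtain ⟨hst1, hst2⟩ := abs_lt.mp hst
  rcases hI with hA | ⟨m, hmo, hmx, hB⟩
  · -- Case A : I = [max(x-2δ,0), x+2δ]
    subst hA
    set a := max (x - 2*δ) 0 with ha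
    set b := x + 2*δ with hb
    have ha0 : 0 ≤ a := le_max_right _ _
    have hax : a ≤ x := max_le (by linarith) hx
    have hxb : x ≤ b := by simp [hb]; linarith
    have hab : a ≤ b := hax.trans hxb
    have hba : b ≤ a + 4*δ := by
      rcases max_cases (x - 2*δ) 0 with ⟨h1, _⟩ | ⟨h1, h2⟩ <;> rw [ha, h1] <;> simp [hb] <;> linarith
    set n := ⌊a⌋₊ with hn
    have hna : (n:ℝ) ≤ a := Nat.floor_le ha0
    have han : a < (n:ℝ) + 1 := Nat.lt_floor_add_one a
    by_cases hb1 : b ≤ (n:ℝ) + 1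
    · -- A0 : I within a single branch [n, n+1]
      have hxm : x ∈ Icc (n:ℝ) (n+1) := ⟨hna.trans hax, hxb.trans hb1⟩
      have ham : a ∈ Icc (n:ℝ) (n+1) := ⟨hna, hab.trans hb1⟩
      have hbm : b ∈ Icc (n:ℝ) (n+1) := ⟨hna.trans hab, hb1⟩
      rcases Nat.even_or_odd n with hne | hno
      · -- increasing branch
        set s := Tval (n+1) with hs
        have hs5 : 5 ≤ s := (Tval_odd_ge hne.add_one).1
        have hTx : T x = (x - n) * s := T_evenb hT hne hxm
        have hTb : T b = T x + 2*δ*s := by rw [T_evenb hT hne hbm, hTx, hb]; ring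
        have hTa0 : 0 ≤ T a := T_nonneg hT ha0
        have claim1 : T a ≤ max (x' - 2*δ) 0 := by
          rcases max_cases (x - 2*δ) 0 with ⟨h1, h2⟩ | ⟨h1, h2⟩
          · have hTa : T a = T x - 2*δ*s := by
              rw [T_evenb hT hne ham, hTx, ha, h1]; ring
            have : T a ≤ x' - 2*δ := by nlinarith
            exact le_max_of_le_left this
          · -- a = 0, n = 0
            have hn0 : (n:ℝ) = 0 := by
              have : (n:ℝ) ≤ 0 := hna.trans_eq (by rw [ha, h1])
              have : (0:ℝ) ≤ n := Nat.cast_nonneg n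
              linarith
            have hTa : T a = 0 := by
              rw [T_evenb hT hne ham, ha, h1, hn0]; ring
            rw [hTa]; exact le_max_right _ _
        have claim2 : x' + 2*δ ≤ T b := by nlinarith
        refine ⟨_, Or.inl rfl, fun z hz => ?_⟩
        obtain ⟨hz1, hz2⟩ := hz
        obtain ⟨w, hw, hwz⟩ := surj_even hT hne hna hab hb1 (claim1.trans hz1)
          (hz2.trans claim2)
        exact ⟨w, hw, hwz⟩
      · -- decreasing branch
        set s := Tval n with hs
        have hs5 : 5 ≤ s := (Tval_odd_ge hno).1
        have hn1 : 1 ≤ n := hno.pos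
        have haeq : a = x - 2*δ := by
          rcases max_cases (x - 2*δ) 0 with ⟨h1, _⟩ | ⟨h1, h2⟩
          · rw [ha, h1]
          · exfalso
            have : (1:ℝ) ≤ n := by exact_mod_cast hn1
            have : (1:ℝ) ≤ a := by linarith
            rw [ha, h1] at this; linarith
        have hTx : T x = ((n:ℝ) + 1 - x) * s := T_oddb hT hno hxm
        have hTa : T a = T x + 2*δ*s := by rw [T_oddb hT hno ham, hTx, haeq]; ring
        have hTb : T b = T x - 2*δ*s := by rw [T_oddb hT hno hbm, hTx, hb]; ring
        have hTb0 : 0 ≤ T b := T_nonneg hT (by linarith)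
        have claim1 : T b ≤ max (x' - 2*δ) 0 := by
          refine le_max_of_le_left ?_; nlinarith
        have claim2 : x' + 2*δ ≤ T a := by nlinarith
        refine ⟨_, Or.inl rfl, fun z hz => ?_⟩
        obtain ⟨hz1, hz2⟩ := hz
        exact surj_odd hT hno hna hab hb1 (claim1.trans hz1) (hz2.trans claim2)
    · -- integer p = n+1 strictly inside I
      push_neg at hb1
      set p := n + 1 with hp
      have hpr : (p:ℝ) = (n:ℝ) + 1 := by push_cast [hp]; ring
      have hap : a < (p:ℝ) := by rw [hpr]; exact han
      have hpb : (p:ℝ) < b := by rw [hpr]; exact hb1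
      have hxp2 : |x - (p:ℝ)| < 2*δ := by
        rw [abs_lt]; constructor
        · have := hpb; rw [hb] at this; linarith
        · have : x - 2*δ ≤ a := le_max_left _ _; linarith
      have hp1 : 1 ≤ p := by omega
      rcases Nat.even_or_odd p with hpe | hpo
      · -- even p inside: valley
        have hno : Odd n := by
          rcases Nat.even_or_odd n with h | h
          · exact absurd (show Odd p by rw [hp]; exact h.add_one) (Nat.not_odd_iff_even.mpr hpe)
          · exact h
        by_cases hxp : (p:ℝ) ≤ x
        · -- x right of p; branch [p, p+1] increasing
          set s := Tval (p+1) with hs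
          have hs5 : 5 ≤ s := (Tval_odd_ge hpe.add_one).1
          have hbp1 : b ≤ (p:ℝ) + 1 := by
            have : x < (p:ℝ) + 2*δ := by have := abs_lt.mp hxp2; linarith [this.2]
            rw [hb]; linarith
          have hxm : x ∈ Icc (p:ℝ) (p+1) := ⟨hxp, by linarith [hxb, hbp1]⟩
          have hbm : b ∈ Icc (p:ℝ) (p+1) := ⟨by linarith [hpb], hbp1⟩
          have hpm : (p:ℝ) ∈ Icc (p:ℝ) (p+1) := ⟨le_refl _, by linarith⟩
          have hTx : T x = (x - p) * s := T_evenb hT hpe hxm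
          have hTb : T b = T x + 2*δ*s := by rw [T_evenb hT hpe hbm, hTx, hb]; ring
          have hTp : T (p:ℝ) = 0 := by rw [T_evenb hT hpe hpm]; ring
          have claim2 : x' + 2*δ ≤ T b := by nlinarith
          refine ⟨_, Or.inl rfl, fun z hz => ?_⟩
          obtain ⟨hz1, hz2⟩ := hz
          have hz0 : T (p:ℝ) ≤ z := by rw [hTp]; exact le_trans (le_max_right _ _) hz1
          obtain ⟨w, hw, hwz⟩ := surj_even hT hpe (le_refl (p:ℝ)) (le_of_lt hpb) hbp1
            hz0 (hz2.trans claim2)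
          exact ⟨w, ⟨le_trans (le_of_lt hap) hw.1, hw.2⟩, hwz⟩
        · -- x left of p; branch [n, n+1] decreasing
          push_neg at hxp
          set s := Tval n with hs
          have hs5 : 5 ≤ s := (Tval_odd_ge hno).1
          have hn1 : 1 ≤ n := hno.pos
          have haeq : a = x - 2*δ := by
            rcases max_cases (x - 2*δ) 0 with ⟨h1, _⟩ | ⟨h1, h2⟩
            · rw [ha, h1]
            · exfalso
              have h1n : (1:ℝ) ≤ n := by exact_mod_cast hn1
              have : (1:ℝ) ≤ a := by linarith
              rw [ha, h1] at this; linarith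
          have hxm : x ∈ Icc (n:ℝ) (n+1) := ⟨hna.trans hax, by rw [← hpr]; linarith⟩
          have ham : a ∈ Icc (n:ℝ) (n+1) := ⟨hna, by linarith [hxm.2]⟩
          have hpm2 : (p:ℝ) ∈ Icc (n:ℝ) (n+1) := ⟨by rw [hpr]; linarith, by rw [hpr]⟩
          have hTx : T x = ((n:ℝ) + 1 - x) * s := T_oddb hT hno hxm
          have hTa : T a = T x + 2*δ*s := by rw [T_oddb hT hno ham, hTx, haeq]; ring
          have hTp : T (p:ℝ) = 0 := by rw [T_oddb hT hno hpm2, hpr]; ring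
          have claim2 : x' + 2*δ ≤ T a := by nlinarith
          refine ⟨_, Or.inl rfl, fun z hz => ?_⟩
          obtain ⟨hz1, hz2⟩ := hz
          have hz0 : T (p:ℝ) ≤ z := by rw [hTp]; exact le_trans (le_max_right _ _) hz1
          obtain ⟨w, hw, hwz⟩ := surj_odd hT hno hna (le_of_lt hap)
            (by rw [hpr]) hz0 (hz2.trans claim2)
          exact ⟨w, ⟨hw.1, le_trans hw.2 (le_of_lt hpb)⟩, hwz⟩
      · -- odd p inside: fold
        set M := Tval p with hM
        obtain ⟨hM5, hMp⟩ := Tval_odd_ge hpo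
        obtain ⟨m', hm'o, hm'M⟩ := Tval_odd_nat hpo
        -- produce: cover : ∀ z, T x - 2δM ≤ z → z ≤ M → ∃ u ∈ I, T u = z, and hTxM : T x ≤ M
        have key : (T x ≤ M) ∧ ∀ z, T x - 2*δ*M ≤ z → z ≤ M → ∃ u ∈ Icc a b, T u = z := by
          by_cases hxp : (p:ℝ) ≤ x
          · -- right side, branch [p, p+1] : decreasing
            have hbp1 : b ≤ (p:ℝ) + 1 := by
              have := abs_lt.mp hxp2; rw [hb]; linarith [this.2]
            have hxm : x ∈ Icc (p:ℝ) (p+1) := ⟨hxp, by linarith [hxb, hbp1]⟩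
            have hbm : b ∈ Icc (p:ℝ) (p+1) := ⟨by linarith [hpb], hbp1⟩
            have hpm : (p:ℝ) ∈ Icc (p:ℝ) (p+1) := ⟨le_refl _, by linarith⟩
            have hTx : T x = ((p:ℝ) + 1 - x) * M := T_oddb hT hpo hxm
            have hTb : T b = T x - 2*δ*M := by rw [T_oddb hT hpo hbm, hTx, hb]; ring
            have hTp : T (p:ℝ) = M := by rw [T_oddb hT hpo hpm]; ring
            refine ⟨by nlinarith, fun z hz1 hz2 => ?_⟩
            have hb1' : T b ≤ z := by rw [hTb]; exact hz1
            have hb2' : z ≤ T (p:ℝ) := by rw [hTp]; exact hz2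
            obtain ⟨w, hw, hwz⟩ := surj_odd hT hpo (le_refl (p:ℝ)) (le_of_lt hpb) hbp1 hb1' hb2'
            exact ⟨w, ⟨le_trans (le_of_lt hap) hw.1, hw.2⟩, hwz⟩
          · -- left side, branch [n, n+1] : increasing (n = p - 1 even)
            push_neg at hxp
            have hne : Even n := by
              rcases Nat.even_or_odd n with h | h
              · exact h
              · exact absurd (show Even p by rw [hp]; exact h.add_one) (Nat.not_even_iff_odd.mpr hpo)
            have hMn : Tval (n+1) = M := by rw [hM, hp]
            have haeq : a = x - 2*δ := by
              have hxgt : (p:ℝ) - 2*δ < x := by have := abs_lt.mp hxp2; linarith [this.1]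
              have hp1r : (1:ℝ) ≤ p := by exact_mod_cast hp1
              rw [ha]; exact max_eq_left (by linarith)
            have hxm : x ∈ Icc (n:ℝ) (n+1) := ⟨hna.trans hax, by rw [← hpr]; linarith⟩
            have ham : a ∈ Icc (n:ℝ) (n+1) := ⟨hna, by linarith [hxm.2]⟩
            have hpm2 : (p:ℝ) ∈ Icc (n:ℝ) (n+1) := ⟨by rw [hpr]; linarith, by rw [hpr]⟩
            have hTx : T x = (x - n) * M := by rw [T_evenb hT hne hxm, hMn]
            have hTa : T a = T x - 2*δ*M := by rw [T_evenb hT hne ham, hMn, hTx, haeq]; ring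
            have hTp : T (p:ℝ) = M := by rw [T_evenb hT hne hpm2, hMn, hpr]; ring
            refine ⟨by rw [hTx]; nlinarith [hxm.1, hxm.2], fun z hz1 hz2 => ?_⟩
            have hb1' : T a ≤ z := by rw [hTa]; exact hz1
            have hb2' : z ≤ T (p:ℝ) := by rw [hTp]; exact hz2
            obtain ⟨w, hw, hwz⟩ := surj_even hT hne hna (le_of_lt hap) (by rw [hpr]) hb1' hb2'
            exact ⟨w, ⟨hw.1, le_trans hw.2 (le_of_lt hpb)⟩, hwz⟩
        obtain ⟨hTxM, cover⟩ := key
        by_cases hcase : x' + 2*δ ≤ M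
        · -- back to case A
          refine ⟨_, Or.inl rfl, fun z hz => ?_⟩
          obtain ⟨hz1, hz2⟩ := hz
          have hxlb : T x - 2*δ*M + 7*δ ≤ x' - 2*δ := by nlinarith
          have hge : max (x' - 2*δ) 0 = x' - 2*δ := by
            have h0 : 0 ≤ T x - 2*δ*M := by
              -- T x - 2δM is T of a point in [0,∞): it's T b or T a; bound via cover? use nonneg:
              obtain ⟨u, hu, hTu⟩ := cover (T x - 2*δ*M) (le_refl _) (by nlinarith)
              rw [← hTu]; exact T_nonneg hT (le_trans ha0 hu.1)
            apply max_eq_left; nlinarith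
          rw [hge] at hz1
          exact cover z (by linarith) (by linarith)
        · -- case B
          push_neg at hcase
          refine ⟨Icc ((m':ℝ) - 3*δ) (m':ℝ), Or.inr ⟨m', hm'o, ?_, rfl⟩, fun z hz => ?_⟩
          · rw [hm'M, ← hM, abs_lt]; constructor <;> nlinarith
          · obtain ⟨hz1, hz2⟩ := hz
            rw [hm'M, ← hM] at hz1 hz2
            exact cover z (by nlinarith) hz2
  · -- Case B : I = [m - 3δ, m]
    subst hB
    obtain ⟨r, hr⟩ := id hmo
    set q := 2*r with hq
    have hqe : Even q := even_two_mul r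
    have hqm : m = q + 1 := by omega
    have hqr : (q:ℝ) = (m:ℝ) - 1 := by rw [hqm]; push_cast; ring
    set M := Tval m with hM
    obtain ⟨hM5, hMm⟩ := Tval_odd_ge hmo
    obtain ⟨m', hm'o, hm'M⟩ := Tval_odd_nat hmo
    have hMq : Tval (q+1) = M := by rw [hM, hqm]
    have hmx' := abs_lt.mp hmx
    -- I ⊆ [q, q+1]
    have hIl : (q:ℝ) ≤ (m:ℝ) - 3*δ := by rw [hqr]; linarith
    have hIu : (m:ℝ) ≤ (q:ℝ) + 1 := by rw [hqr]; linarith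
    have hlm : (m:ℝ) - 3*δ ∈ Icc (q:ℝ) (q+1) := ⟨hIl, by linarith⟩
    have hmm : (m:ℝ) ∈ Icc (q:ℝ) (q+1) := ⟨by linarith, hIu⟩
    have hTl : T ((m:ℝ) - 3*δ) = M - 3*δ*M := by
      rw [T_evenb hT hqe hlm, hMq, hqr]; ring
    have hTm : T (m:ℝ) = M := by rw [T_evenb hT hqe hmm, hMq, hqr]; ring
    -- bounds on T x
    have hdb : M - 2*δ*M < T x ∧ T x ≤ M := by
      by_cases hxm2 : x ≤ (m:ℝ)
      · have hxmem : x ∈ Icc (q:ℝ) (q+1) := ⟨by rw [hqr]; linarith, by linarith⟩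
        have hTxe : T x = (x - q) * M := by rw [T_evenb hT hqe hxmem, hMq]
        have e1 : 0 < M * (x - ((m:ℝ) - 1) - (1 - 2*δ)) :=
          mul_pos (by linarith) (by linarith [hmx'.1])
        have e2 : 0 ≤ M * ((m:ℝ) - x) := mul_nonneg (by linarith) (by linarith)
        rw [hTxe, hqr]; constructor <;> nlinarith [e1, e2]
      · push_neg at hxm2
        have hxmem : x ∈ Icc (m:ℝ) ((m:ℝ)+1) := ⟨le_of_lt hxm2, by linarith⟩
        have hTxe : T x = ((m:ℝ) + 1 - x) * M := T_oddb hT hmo hxmem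
        have e1 : 0 < M * (2*δ - (x - (m:ℝ))) :=
          mul_pos (by linarith) (by linarith [hmx'.2])
        have e2 : 0 ≤ M * (x - (m:ℝ)) := mul_nonneg (by linarith) (by linarith)
        rw [hTxe]; constructor <;> nlinarith [e1, e2]
    obtain ⟨hd1, hd2⟩ := hdb
    by_cases hcase : x' + 2*δ ≤ M
    · -- back to case A
      have e1 : 0 ≤ (M - 5) * (1 - 2*δ) := mul_nonneg (by linarith) (by linarith)
      have e2 : 5*δ ≤ δ*M := by nlinarith
      refine ⟨_, Or.inl rfl, fun z hz => ?_⟩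
      obtain ⟨hz1, hz2⟩ := hz
      have hge : max (x' - 2*δ) 0 = x' - 2*δ := by apply max_eq_left; nlinarith [e1]
      rw [hge] at hz1
      have hb1' : T ((m:ℝ) - 3*δ) ≤ z := by rw [hTl]; nlinarith [e2]
      have hb2' : z ≤ T (m:ℝ) := by rw [hTm]; linarith
      obtain ⟨w, hw, hwz⟩ := surj_even hT hqe hIl (by linarith) hIu hb1' hb2'
      exact ⟨w, hw, hwz⟩
    · -- stay in case B
      push_neg at hcase
      refine ⟨Icc ((m':ℝ) - 3*δ) (m':ℝ), Or.inr ⟨m', hm'o, ?_, rfl⟩, fun z hz => ?_⟩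
      · rw [hm'M, ← hM, abs_lt]; constructor <;> nlinarith
      · obtain ⟨hz1, hz2⟩ := hz
        rw [hm'M, ← hM] at hz1 hz2
        have hb1' : T ((m:ℝ) - 3*δ) ≤ z := by rw [hTl]; nlinarith
        have hb2' : z ≤ T (m:ℝ) := by rw [hTm]; linarith
        obtain ⟨w, hw, hwz⟩ := surj_even hT hqe hIl (by linarith) hIu hb1' hb2'
        exact ⟨w, hw, hwz⟩

lemma good_props {δ x : ℝ} {I : Set ℝ} (hδ0 : 0 < δ) (hδ : δ < 1/4) (hx : 0 ≤ x)
    (h : Good δ x I) :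
    (∃ a b : ℝ, I = Icc a b ∧ 0 ≤ a ∧ a ≤ b) ∧ ∀ z ∈ I, |z - x| ≤ 21*δ := by
  rcases h with h | ⟨m, hmo, hmx, h⟩
  · subst h
    refine ⟨⟨_, _, rfl, le_max_right _ _, max_le (by linarith) (by linarith)⟩, fun z hz => ?_⟩
    obtain ⟨hz1, hz2⟩ := hz
    have : x - 2*δ ≤ z := le_trans (le_max_left _ _) hz1
    rw [abs_le]; constructor <;> linarith
  · subst h
    have hm1 : (1:ℝ) ≤ m := by exact_mod_cast hmo.pos
    have hmx' := abs_lt.mp hmx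
    refine ⟨⟨_, _, rfl, by linarith, by linarith⟩, fun z hz => ?_⟩
    obtain ⟨hz1, hz2⟩ := hz
    rw [abs_le]; constructor <;> linarith

/-- For `0 < δ < 1/4`, every `δ`-pseudo orbit of `T` is `21 δ`-shadowed by a
true orbit. -/
theorem pseudo_orbit_shadowed (T : ℝ → ℝ) (hT : IsT T) (δ : ℝ)
    (hδ0 : 0 < δ) (hδ : δ < 1 / 4) (x : ℕ → ℝ) (hx : IsPseudoOrbit T δ x) :
    ∃ y : ℝ, 0 ≤ y ∧ ∀ k : ℕ, |T^[k] y - x k| ≤ 21 * δ := by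
  obtain ⟨hx0, hxd⟩ := hx
  -- build the sequence of good intervals
  have hstep : ∀ k : ℕ, ∀ I : Set ℝ, Good δ (x k) I →
      ∃ I', Good δ (x (k+1)) I' ∧ ∀ z ∈ I', ∃ u ∈ I, T u = z :=
    fun k I hI => step hT hδ0 hδ (hx0 k) (hx0 (k+1)) (hxd k) hI
  choose f hf1 hf2 using hstep
  set I0 : Set ℝ := Icc (max (x 0 - 2*δ) 0) (x 0 + 2*δ) with hI0
  have hg0 : Good δ (x 0) I0 := Or.inl rfl
  let G : ∀ k : ℕ, {I : Set ℝ // Good δ (x k) I} := fun k =>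
    Nat.rec ⟨I0, hg0⟩ (fun k p => ⟨f k p.1 p.2, hf1 k p.1 p.2⟩) k
  set I : ℕ → Set ℝ := fun k => (G k).1 with hI
  have hgood : ∀ k, Good δ (x k) (I k) := fun k => (G k).2
  have hlink : ∀ k, ∀ z ∈ I (k+1), ∃ u ∈ I k, T u = z := fun k => hf2 k (G k).1 (G k).2
  -- the nested compact sets
  let J : ℕ → Set ℝ := fun k =>
    Nat.rec I0 (fun k Jk => Jk ∩ (T^[k+1]) ⁻¹' (I (k+1))) k
  have hJ0 : J 0 = I0 := rfl
  have hJs : ∀ k, J (k+1) = J k ∩ (T^[k+1]) ⁻¹' (I (k+1)) := fun k => rfl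
  have hJsub : ∀ k, J (k+1) ⊆ J k := fun k => by rw [hJs k]; exact inter_subset_left
  have hJpos : ∀ k, J k ⊆ Ici 0 := by
    intro k
    induction k with
    | zero =>
      rw [hJ0]
      obtain ⟨⟨a, b, hab, ha0, _⟩, _⟩ := good_props hδ0 hδ (hx0 0) hg0
      rw [show I0 = Icc a b from hab]
      exact fun z hz => le_trans ha0 hz.1
    | succ k ih => exact (hJsub k).trans ih
  have hJclosed : ∀ k, IsClosed (J k) := by
    intro k
    induction k with
    | zero => rw [hJ0, hI0]; exact isClosed_Icc
    | succ k ih =>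
      rw [hJs k]
      obtain ⟨⟨a, b, hab, _, _⟩, _⟩ := good_props hδ0 hδ (hx0 (k+1)) (hgood (k+1))
      exact ContinuousOn.preimage_isClosed_of_isClosed
        ((T_iter_contOn hT (k+1)).mono (hJpos k)) ih (hab ▸ isClosed_Icc)
  have hJcompact : ∀ k, IsCompact (J k) := by
    intro k
    induction k with
    | zero => rw [hJ0, hI0]; exact isCompact_Icc
    | succ k ih =>
      exact IsCompact.of_isClosed_subset ih (hJclosed (k+1)) (hJsub k)
  have hsurj : ∀ k, ∀ z ∈ I k, ∃ w ∈ J k, T^[k] w = z := by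
    intro k
    induction k with
    | zero => exact fun z hz => ⟨z, hz, by simp⟩
    | succ k ih =>
      intro z hz
      obtain ⟨u, hu, hTu⟩ := hlink k z hz
      obtain ⟨w, hw, hTw⟩ := ih u hu
      have hit : T^[k+1] w = z := by
        rw [Function.iterate_succ_apply', hTw, hTu]
      exact ⟨w, by rw [hJs k]; exact ⟨hw, by rw [mem_preimage, hit]; exact hz⟩, hit⟩
  have hJne : ∀ k, (J k).Nonempty := by
    intro k
    obtain ⟨⟨a, b, hab, _, hab2⟩, _⟩ := good_props hδ0 hδ (hx0 k) (hgood k)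
    obtain ⟨w, hw, _⟩ := hsurj k a (by rw [hab]; exact ⟨le_refl _, hab2⟩)
    exact ⟨w, hw⟩
  have hmem : ∀ k, ∀ w ∈ J k, T^[k] w ∈ I k := by
    intro k
    cases k with
    | zero => intro w hw; exact hw
    | succ k => intro w hw; rw [hJs k] at hw; exact hw.2
  obtain ⟨y, hy⟩ := IsCompact.nonempty_iInter_of_sequence_nonempty_isCompact_isClosed
    J hJsub hJne (hJcompact 0) hJclosed
  rw [mem_iInter] at hy
  refine ⟨y, hJpos 0 (hy 0), fun k => ?_⟩
  obtain ⟨_, hbd⟩ := good_props hδ0 hδ (hx0 k) (hgood k)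
  exact hbd _ (hmem k y (hy k))
end
end

section
/- Let x ∈ [0,∞) be such that T^k(x) ∉ ℤ for all k ∈ ℕ, and let (i_k)_{k∈ℕ} be its itinerary, i.e. the sequence of positive integers with T^k(x) ∈ (i_k − 1, i_k) for all k. If there is n ∈ ℕ such that i_{k+n+1} = i_k for all k ∈ ℕ, then T^{n+1}(x) = x. -/
open Set Filter

noncomputable section

lemma ell_mem (m : ℕ) : 1 ≤ ell m ∧ m ≤ 4 ^ ell m := by
  have hne : {k : ℕ | 1 ≤ k ∧ m ≤ 4 ^ k}.Nonempty := by
    refine ⟨m + 1, Nat.succ_le_succ (Nat.zero_le m), ?_⟩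
    calc m ≤ 2 ^ m := Nat.le_of_lt (Nat.lt_two_pow_self (n := m))
    _ ≤ 4 ^ (m + 1) := by
        calc (2:ℕ) ^ m ≤ 4 ^ m := Nat.pow_le_pow_left (by norm_num) m
        _ ≤ 4 ^ (m + 1) := Nat.pow_le_pow_right (by norm_num) (Nat.le_succ m)
  exact Nat.sInf_mem hne

lemma Tval_succ_sub (m : ℕ) : 5 ≤ |Tval (m + 1) - Tval m| := by
  have h5 : ∀ j : ℕ, (5:ℝ) ≤ 4 ^ ell j + 1 := by
    intro j
    have h1 := (ell_mem j).1
    have : (4:ℝ) ^ 1 ≤ 4 ^ ell j := by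
      apply pow_le_pow_right₀ (by norm_num) h1
    simp at this; linarith
  rcases Nat.even_or_odd m with he | ho
  · have h1 : ¬ Even (m + 1) := by simp [Nat.even_add_one, he]
    rw [Tval, Tval, if_pos he, if_neg h1]
    rw [sub_zero, abs_of_nonneg (by positivity)]
    exact h5 _
  · have h0 : ¬ Even m := Nat.not_even_iff_odd.mpr ho
    have h1 : Even (m + 1) := by simp [Nat.even_add_one, h0]
    rw [Tval, Tval, if_pos h1, if_neg h0]
    rw [zero_sub, abs_neg, abs_of_nonneg (by positivity)]
    exact h5 _

lemma expand_step (T : ℝ → ℝ) (hT : IsT T) (j : ℕ) (hj : 1 ≤ j)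
    (a b : ℝ) (ha : a ∈ Set.Ioo ((j:ℝ) - 1) j) (hb : b ∈ Set.Ioo ((j:ℝ) - 1) j) :
    5 * |a - b| ≤ |T a - T b| := by
  obtain ⟨m, rfl⟩ := Nat.exists_eq_add_of_le hj
  have hcast : ((1 + m : ℕ) : ℝ) = (m : ℝ) + 1 := by push_cast; ring
  have hmem : ∀ c : ℝ, c ∈ Set.Ioo (((1 + m : ℕ):ℝ) - 1) ((1 + m : ℕ):ℝ) →
      c ∈ Set.Icc ((m:ℝ)) ((m:ℝ) + 1) := by
    intro c hc
    rw [hcast] at hc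
    constructor <;> [linarith [hc.1]; linarith [hc.2]]
  have hTa := hT m a (hmem a ha)
  have hTb := hT m b (hmem b hb)
  have key : T a - T b = (a - b) * (Tval (m + 1) - Tval m) := by
    rw [hTa, hTb]; ring
  rw [key, abs_mul]
  have := Tval_succ_sub m
  have hab : (0:ℝ) ≤ |a - b| := abs_nonneg _
  nlinarith

/-- If the itinerary of a point `x` (whose orbit never hits an integer) is
periodic with period `n + 1` for the shift, then `T^[n+1] x = x`. -/
theorem periodic_itinerary_periodic_point (T : ℝ → ℝ) (hT : IsT T)
    (x : ℝ) (hx0 : 0 ≤ x) (hnex : ∀ k : ℕ, ∀ m : ℤ, T^[k] x ≠ (m : ℝ))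
    (i : ℕ → ℕ)
    (hitin : ∀ k : ℕ, 1 ≤ i k ∧ T^[k] x ∈ Set.Ioo ((i k : ℝ) - 1) (i k))
    (n : ℕ) (hper : ∀ k : ℕ, i (k + n + 1) = i k) :
    T^[n + 1] x = x := by
  set y := T^[n + 1] x with hy
  have hity : ∀ k : ℕ, T^[k] y ∈ Set.Ioo ((i k : ℝ) - 1) (i k) := by
    intro k
    have : T^[k] y = T^[k + n + 1] x := by
      rw [hy, ← Function.iterate_add_apply]
      rfl
    rw [this]
    have := (hitin (k + n + 1)).2
    rwa [hper k] at this
  have key : ∀ k : ℕ, 5 ^ k * |x - y| ≤ |T^[k] x - T^[k] y| := by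
    intro k
    induction k with
    | zero => simp
    | succ k ih =>
      have hstep := expand_step T hT (i k) (hitin k).1 (T^[k] x) (T^[k] y)
        (hitin k).2 (hity k)
      rw [Function.iterate_succ_apply', Function.iterate_succ_apply']
      calc 5 ^ (k + 1) * |x - y| = 5 * (5 ^ k * |x - y|) := by ring
      _ ≤ 5 * |T^[k] x - T^[k] y| := by linarith
      _ ≤ _ := hstep
  have hlt1 : ∀ k : ℕ, |T^[k] x - T^[k] y| < 1 := by
    intro k
    have h1 := (hitin k).2
    have h2 := hity k
    rw [abs_sub_lt_iff]
    constructor <;> [linarith [h1.2, h2.1]; linarith [h1.1, h2.2]]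
  have hzero : |x - y| = 0 := by
    by_contra h
    have hpos : 0 < |x - y| := lt_of_le_of_ne (abs_nonneg _) (Ne.symm h)
    obtain ⟨k, hk⟩ := pow_unbounded_of_one_lt (1 / |x - y|) (by norm_num : (1:ℝ) < 5)
    have := key k
    have := hlt1 k
    have : 5 ^ k * |x - y| < 1 := lt_of_le_of_lt (key k) (hlt1 k)
    rw [div_lt_iff₀ hpos] at hk
    linarith
  have : x = y := by
    have := abs_eq_zero.mp hzero
    linarith [sub_eq_zero.mp this]
  exact this.symm
end
end
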